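/- Under the label shift assumption with p(y) > 0 for all y, if the confusion matrix C is invertible, then the importance weight vector is exactly recovered as w = C⁻¹ μ_ŷ; in particular, w is the unique vector v ∈ ℝ^k satisfying μ_ŷ = C v. -/

import Mathlib

open MeasureTheory ProbabilityTheory Filter Matrix

noncomputable section

/-- Population confusion matrix: `C i j = P (f⁻¹(i) × {j})`. -/
def confusion {X : Type*} [MeasurableSpace X] {k : ℕ}
    (P : Measure (X × Fin k)) (f : X → Fin k) : Matrix (Fin k) (Fin k) ℝ :=
  fun i j => (P ((f ⁻¹' {i}) ×ˢ ({j} : Set (Fin k)))).toReal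

/-- Under label shift with `p(y) > 0` and an invertible confusion matrix,
the weight vector is exactly recovered: `w = C⁻¹ μ_ŷ`, and `w` is the unique solution of
`μ_ŷ = C v`. -/
theorem label_shift_exact_recovery
    {X : Type*} [MeasurableSpace X] {k : ℕ} (hk : 1 ≤ k)
    (P Q : Measure (X × Fin k)) [IsProbabilityMeasure P] [IsProbabilityMeasure Q]
    (f : X → Fin k) (hf : Measurable f)
    (A1 : ∀ (y : Fin k) (A : Set X), MeasurableSet A →
      P (A ×ˢ ({y} : Set (Fin k))) * Q (Set.univ ×ˢ ({y} : Set (Fin k)))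
        = Q (A ×ˢ ({y} : Set (Fin k))) * P (Set.univ ×ˢ ({y} : Set (Fin k))))
    (A2 : ∀ y : Fin k, 0 < (P (Set.univ ×ˢ ({y} : Set (Fin k)))).toReal)
    (A3 : IsUnit (confusion P f).det) :
    (confusion P f)⁻¹ *ᵥ (fun i => (Q ((f ⁻¹' {i}) ×ˢ (Set.univ : Set (Fin k)))).toReal)
        = (fun j => (Q (Set.univ ×ˢ ({j} : Set (Fin k)))).toReal / (P (Set.univ ×ˢ ({j} : Set (Fin k)))).toReal) ∧
      ∀ v : Fin k → ℝ,
        (fun i => (Q ((f ⁻¹' {i}) ×ˢ (Set.univ : Set (Fin k)))).toReal)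
            = (confusion P f) *ᵥ v →
          v = (fun j => (Q (Set.univ ×ˢ ({j} : Set (Fin k)))).toReal / (P (Set.univ ×ˢ ({j} : Set (Fin k)))).toReal) := by
  set C := confusion P f with hCdef
  set w : Fin k → ℝ := fun j =>
    (Q (Set.univ ×ˢ ({j} : Set (Fin k)))).toReal / (P (Set.univ ×ˢ ({j} : Set (Fin k)))).toReal
    with hwdef
  -- pointwise relation from A1
  have hQP : ∀ (j : Fin k) (A : Set X), MeasurableSet A →
      (Q (A ×ˢ ({j} : Set (Fin k)))).toReal = (P (A ×ˢ ({j} : Set (Fin k)))).toReal * w j := by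
    intro j A hA
    have h := congrArg ENNReal.toReal (A1 j A hA)
    rw [ENNReal.toReal_mul, ENNReal.toReal_mul] at h
    have hp := A2 j
    simp only [hwdef]
    rw [← mul_div_assoc, eq_div_iff (A2 j).ne']
    linarith [h]
  -- decomposition of A ×ˢ univ
  have hdec : ∀ A : Set X, MeasurableSet A →
      (Q (A ×ˢ (Set.univ : Set (Fin k)))).toReal
        = ∑ j : Fin k, (Q (A ×ˢ ({j} : Set (Fin k)))).toReal := by
    intro A hA
    have hU : A ×ˢ (Set.univ : Set (Fin k)) = ⋃ j : Fin k, A ×ˢ ({j} : Set (Fin k)) := by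
      ext x
      simp [Set.mem_prod]
    rw [hU, measure_iUnion ?_ ?_]
    · rw [tsum_fintype]
      exact ENNReal.toReal_sum (fun j _ => measure_ne_top Q _)
    · intro i j hij
      simp only [Function.onFun, Set.disjoint_left]
      rintro ⟨x, y⟩ ⟨-, hy1⟩ ⟨-, hy2⟩
      simp only [Set.mem_singleton_iff] at hy1 hy2
      exact hij (hy1.symm.trans hy2)
    · exact fun j => hA.prod (measurableSet_singleton j)
  -- μ = C *ᵥ w
  have hmu : (fun i => (Q ((f ⁻¹' {i}) ×ˢ (Set.univ : Set (Fin k)))).toReal) = C *ᵥ w := by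
    funext i
    have hAi : MeasurableSet (f ⁻¹' {i}) := hf (measurableSet_singleton i)
    rw [hdec _ hAi]
    simp only [Matrix.mulVec, dotProduct]
    exact Finset.sum_congr rfl fun j _ => hQP j _ hAi
  have hinv : ∀ v : Fin k → ℝ, C⁻¹ *ᵥ (C *ᵥ v) = v := by
    intro v
    rw [Matrix.mulVec_mulVec, Matrix.nonsing_inv_mul C A3, Matrix.one_mulVec]
  refine ⟨by rw [hmu, hinv], fun v hv => ?_⟩
  have : C *ᵥ v = C *ᵥ w := by rw [← hv, hmu]
  calc v = C⁻¹ *ᵥ (C *ᵥ v) := (hinv v).symm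
    _ = C⁻¹ *ᵥ (C *ᵥ w) := by rw [this]
    _ = w := hinv w

end
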